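/- Let F be an arc on the unit circle and α ∈ (0,1). For every z in the level set L_F(α) = {z ∈ D : χ̂_F(z) = α}, the Wirtinger derivative satisfies |∂χ̂_F/∂z (z)| = sin(πα)/(π(1−|z|²)). -/

import Mathlib

open Complex Metric Real

/-- The Poisson integral of the characteristic function of the arc
`F = {e^{iθ} : a < θ < b}`. -/
noncomputable def poissonArc (a b : ℝ) (z : ℂ) : ℝ :=
  (∫ θ in a..b, ((Complex.exp (θ * Complex.I) + z) /
      (Complex.exp (θ * Complex.I) - z)).re) / (2 * Real.pi)

/-- The Wirtinger derivative `∂u/∂z = (1/2)(∂u/∂x − i ∂u/∂y)`. -/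
noncomputable def wirtinger (u : ℂ → ℝ) (z : ℂ) : ℂ :=
  (1 / 2) * ((fderiv ℝ u z 1 : ℝ) - Complex.I * (fderiv ℝ u z Complex.I : ℝ))

section aux

open MeasureTheory intervalIntegral

lemma aw_ne (θ : ℝ) {ζ : ℂ} (hζ : ‖ζ‖ < 1) : Complex.exp (θ*Complex.I) - ζ ≠ 0 := by
  intro h
  have h1 : ‖Complex.exp (θ*Complex.I)‖ = 1 := Complex.norm_exp_ofReal_mul_I θ
  rw [sub_eq_zero] at h
  rw [h] at h1
  linarith

lemma aw_norm_lb (θ : ℝ) (ζ : ℂ) : 1 - ‖ζ‖ ≤ ‖Complex.exp (θ*Complex.I) - ζ‖ := by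
  have h1 : ‖Complex.exp (θ*Complex.I)‖ = 1 := Complex.norm_exp_ofReal_mul_I θ
  have := norm_sub_norm_le (Complex.exp (θ*Complex.I)) ζ
  linarith

lemma aw_contK {ζ : ℂ} (hζ : ‖ζ‖ < 1) :
    Continuous fun θ : ℝ => (Complex.exp (θ*Complex.I) + ζ)/(Complex.exp (θ*Complex.I) - ζ) := by
  apply Continuous.div
  · exact ((Complex.continuous_ofReal.mul continuous_const).cexp).add continuous_const
  · exact ((Complex.continuous_ofReal.mul continuous_const).cexp).sub continuous_const
  · exact fun θ => aw_ne θ hζ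

lemma aw_contK' {ζ : ℂ} (hζ : ‖ζ‖ < 1) :
    Continuous fun θ : ℝ => 2*Complex.exp (θ*Complex.I)/(Complex.exp (θ*Complex.I) - ζ)^2 := by
  apply Continuous.div
  · exact continuous_const.mul ((Complex.continuous_ofReal.mul continuous_const).cexp)
  · exact (((Complex.continuous_ofReal.mul continuous_const).cexp).sub continuous_const).pow 2
  · exact fun θ => pow_ne_zero 2 (aw_ne θ hζ)

lemma aw_contg {z : ℂ} (hz : ‖z‖ < 1) :
    Continuous fun θ : ℝ => Complex.I * Complex.exp (θ*Complex.I)/(Complex.exp (θ*Complex.I) - z) := by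
  apply Continuous.div
  · exact continuous_const.mul ((Complex.continuous_ofReal.mul continuous_const).cexp)
  · exact ((Complex.continuous_ofReal.mul continuous_const).cexp).sub continuous_const
  · exact fun θ => aw_ne θ hz

lemma aw_hexp (t : ℝ) : HasDerivAt (fun s : ℝ => Complex.exp (s*Complex.I)) (Complex.I * Complex.exp (t*Complex.I)) t := by
  have := (((hasDerivAt_id (t:ℂ)).mul_const Complex.I).cexp).comp_ofReal
  simpa [mul_comm] using this

lemma aw_hasDerivAt_H (a b : ℝ) {z : ℂ} (hz : ‖z‖ < 1) :
    HasDerivAt (fun ζ => ∫ θ in a..b, (Complex.exp (θ*Complex.I) + ζ)/(Complex.exp (θ*Complex.I) - ζ))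
      (∫ θ in a..b, 2*Complex.exp (θ*Complex.I)/(Complex.exp (θ*Complex.I) - z)^2) z := by
  set ε := (1 - ‖z‖)/2 with hεdef
  have hε0 : 0 < ε := by simp only [hεdef]; linarith
  have hr : ‖z‖ + ε < 1 := by simp only [hεdef]; linarith
  have hball : ∀ ζ ∈ ball z ε, ‖ζ‖ ≤ ‖z‖ + ε := by
    intro ζ hζ
    have := mem_ball_iff_norm.1 hζ
    have h2 := norm_sub_norm_le ζ z
    linarith
  have key := intervalIntegral.hasDerivAt_integral_of_dominated_loc_of_deriv_le (μ := MeasureTheory.volume)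
    (a := a) (b := b) (x₀ := z)
    (F := fun ζ θ => (Complex.exp (θ*Complex.I) + ζ)/(Complex.exp (θ*Complex.I) - ζ))
    (F' := fun ζ θ => 2*Complex.exp (θ*Complex.I)/(Complex.exp (θ*Complex.I) - ζ)^2)
    (bound := fun _ => 2/(1 - (‖z‖ + ε))^2) (ball_mem_nhds z hε0)
    ?_ ?_ ?_ ?_ ?_ ?_
  · exact key.2
  · filter_upwards [isOpen_ball.eventually_mem (mem_ball_self hε0)] with ζ hζ
    have : ‖ζ‖ < 1 := lt_of_le_of_lt (hball ζ hζ) hr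
    exact (aw_contK this).aestronglyMeasurable
  · exact (aw_contK hz).intervalIntegrable a b
  · exact (aw_contK' hz).aestronglyMeasurable
  · apply ae_of_all
    intro θ _ ζ hζ
    have habs : ‖ζ‖ ≤ ‖z‖ + ε := hball ζ hζ
    have hlb : 1 - (‖z‖ + ε) ≤ ‖Complex.exp (θ*Complex.I) - ζ‖ := by
      have := aw_norm_lb θ ζ
      linarith
    have hpos : (0:ℝ) < 1 - (‖z‖ + ε) := by linarith
    rw [norm_div, norm_mul, norm_pow]
    have h1 : ‖Complex.exp (θ*Complex.I)‖ = 1 := Complex.norm_exp_ofReal_mul_I θ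
    rw [h1]
    rw [Complex.norm_two, mul_one]
    have hsq : (1 - (‖z‖ + ε))^2 ≤ (‖Complex.exp (θ*Complex.I) - ζ‖)^2 := by
      nlinarith
    exact div_le_div_of_nonneg_left (by norm_num) (by positivity) hsq
  · exact intervalIntegrable_const
  · apply ae_of_all
    intro θ _ ζ hζ
    have hne : Complex.exp (θ*Complex.I) - ζ ≠ 0 := aw_ne θ (lt_of_le_of_lt (hball ζ hζ) hr)
    have hd : HasDerivAt (fun ζ => (Complex.exp (θ*Complex.I) + ζ)/(Complex.exp (θ*Complex.I) - ζ))
        ((1 * (Complex.exp (θ*Complex.I) - ζ) - (Complex.exp (θ*Complex.I) + ζ) * (-1)) / (Complex.exp (θ*Complex.I) - ζ)^2) ζ :=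
        (((hasDerivAt_id ζ).const_add (Complex.exp (θ*Complex.I))).div
      ((hasDerivAt_id ζ).const_sub (Complex.exp (θ*Complex.I))) hne)
    refine hd.congr_deriv ?_
    ring

lemma aw_integral_deriv (a b : ℝ) {z : ℂ} (hz : ‖z‖ < 1) :
    ∫ θ in a..b, 2*Complex.exp (θ*Complex.I)/(Complex.exp (θ*Complex.I) - z)^2
      = 2*Complex.I/(Complex.exp (b*Complex.I)-z) - 2*Complex.I/(Complex.exp (a*Complex.I)-z) := by
  have h : ∀ t ∈ Set.uIcc a b, HasDerivAt (fun s : ℝ => 2*Complex.I/(Complex.exp (s*Complex.I)-z))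
      (2*Complex.exp (t*Complex.I)/(Complex.exp (t*Complex.I) - z)^2) t := by
    intro t _
    have hne : Complex.exp (t*Complex.I) - z ≠ 0 := aw_ne t hz
    have hf : HasDerivAt (fun s : ℝ => Complex.exp (s*Complex.I) - z)
        (Complex.I * Complex.exp (t*Complex.I)) t := (aw_hexp t).sub_const z
    have hd : HasDerivAt (fun s : ℝ => 2*Complex.I/(Complex.exp (s*Complex.I)-z))
        ((0 * (Complex.exp (t*Complex.I) - z) - 2*Complex.I * (Complex.I * Complex.exp (t*Complex.I))) / (Complex.exp (t*Complex.I) - z)^2) t :=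
      HasDerivAt.div (c := fun _ : ℝ => 2*Complex.I)
      (d := fun s : ℝ => Complex.exp (s*Complex.I) - z) (x := t)
      (hasDerivAt_const t (2*Complex.I)) hf hne
    convert hd using 1
    congr 1
    linear_combination (2*Complex.exp (t*Complex.I)) * Complex.I_sq
  exact intervalIntegral.integral_eq_sub_of_hasDerivAt h ((aw_contK' hz).intervalIntegrable a b)

lemma aw_exp_identity (a b : ℝ) {z : ℂ} (hz : ‖z‖ < 1) :
    Complex.exp (b*Complex.I) - z = (Complex.exp (a*Complex.I) - z) *
      Complex.exp (∫ θ in a..b, Complex.I * Complex.exp (θ*Complex.I)/(Complex.exp (θ*Complex.I) - z)) := by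
  set g : ℝ → ℂ := fun θ => Complex.I * Complex.exp (θ*Complex.I)/(Complex.exp (θ*Complex.I) - z) with hg
  have hgc : Continuous g := aw_contg hz
  set G : ℝ → ℂ := fun t => ∫ θ in a..t, g θ with hG
  have hGd : ∀ t : ℝ, HasDerivAt G (g t) t := by
    intro t
    exact intervalIntegral.integral_hasDerivAt_right (hgc.intervalIntegrable a t)
      (hgc.aestronglyMeasurable.stronglyMeasurableAtFilter) hgc.continuousAt
  set φ : ℝ → ℂ := fun t => (Complex.exp (t*Complex.I) - z) * Complex.exp (-(G t)) with hφdef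
  have hφ : ∀ t : ℝ, HasDerivAt φ 0 t := by
    intro t
    have h1 : HasDerivAt (fun s : ℝ => Complex.exp (s*Complex.I) - z)
        (Complex.I * Complex.exp (t*Complex.I)) t := (aw_hexp t).sub_const z
    have h2 : HasDerivAt (fun s : ℝ => Complex.exp (-(G s)))
        (Complex.exp (-(G t)) * (-(g t))) t := ((hGd t).neg).cexp
    have h3 : HasDerivAt φ (Complex.I * Complex.exp (t*Complex.I) * Complex.exp (-(G t)) + (Complex.exp (t*Complex.I) - z) * (Complex.exp (-(G t)) * (-(g t)))) t := h1.mul h2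
    convert h3 using 1
    rw [hg]
    have hne' : Complex.exp (Complex.I*t) - z ≠ 0 := by rw [mul_comm]; exact aw_ne t hz
    field_simp [aw_ne t hz, hne']
    ring
  have hconst : φ b = φ a :=
    is_const_of_deriv_eq_zero (fun t => (hφ t).differentiableAt) (fun t => (hφ t).deriv) b a
  have hGa : G a = 0 := intervalIntegral.integral_same
  have hφa : φ a = Complex.exp (a*Complex.I) - z := by
    rw [hφdef]; simp [hGa]
  have := hconst.trans hφa
  rw [hφdef] at this
  simp only at this
  have h4 := congrArg (fun w => w * Complex.exp (G b)) this
  rw [mul_assoc, ← Complex.exp_add] at h4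
  simp at h4
  exact h4

lemma aw_im (a s : ℝ) (z : ℂ) :
    ((Complex.exp (((a+2*s : ℝ) : ℂ)*Complex.I) - z) * (starRingEnd ℂ) (Complex.exp (((a : ℝ) : ℂ)*Complex.I) - z) *
      Complex.exp (((-s : ℝ) : ℂ)*Complex.I)).im = (1 - Complex.normSq z) * Real.sin s := by
  simp only [Complex.mul_im, Complex.mul_re, Complex.sub_re, Complex.sub_im,
    Complex.conj_re, Complex.conj_im, Complex.exp_ofReal_mul_I_re, Complex.exp_ofReal_mul_I_im,
    Complex.normSq_apply, Real.cos_neg, Real.sin_neg]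
  rw [show a + 2*s = (a+s)+s by ring, Real.cos_add (a+s) s, Real.sin_add (a+s) s,
    Real.cos_add a s, Real.sin_add a s]
  linear_combination (Real.sin s * Real.cos s^2 + Real.sin s^3) * (Real.sin_sq_add_cos_sq a)
    + (Real.cos s * Real.cos a * z.im - Real.cos s * Real.sin a * z.re + Real.sin s
       - Real.sin s * Real.cos a * z.re - Real.sin s * Real.sin a * z.im) * (Real.sin_sq_add_cos_sq s)

lemma aw_absAB (a b : ℝ) (h1 : 0 < b - a) (h2 : b - a < 2*Real.pi) :
    ‖Complex.exp (((a:ℝ):ℂ)*Complex.I) - Complex.exp (((b:ℝ):ℂ)*Complex.I)‖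
      = 2 * Real.sin ((b-a)/2) := by
  have key : Complex.exp (((a:ℝ):ℂ)*Complex.I) - Complex.exp (((b:ℝ):ℂ)*Complex.I)
      = Complex.exp ((((a+b)/2:ℝ):ℂ)*Complex.I) *
        ((((-2) * Real.sin ((b-a)/2) : ℝ) : ℂ) * Complex.I) := by
    have e1 : Complex.exp ((((a-b)/2:ℝ):ℂ)*Complex.I) - Complex.exp ((((b-a)/2:ℝ):ℂ)*Complex.I)
        = (((-2) * Real.sin ((b-a)/2) : ℝ) : ℂ) * Complex.I := by
      rw [Complex.exp_mul_I, Complex.exp_mul_I]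
      rw [show ((a-b)/2 : ℝ) = -((b-a)/2) by ring]
      push_cast
      rw [Complex.cos_neg, Complex.sin_neg]
      ring
    rw [← e1, mul_sub, ← Complex.exp_add, ← Complex.exp_add]
    congr 2 <;> push_cast <;> ring
  rw [key, norm_mul, Complex.norm_exp_ofReal_mul_I, one_mul, norm_mul, Complex.norm_I, mul_one,
    Complex.norm_real, Real.norm_eq_abs]
  have hs : 0 < Real.sin ((b-a)/2) := by
    apply Real.sin_pos_of_pos_of_lt_pi <;> [linarith; linarith]
  rw [abs_of_nonpos (by linarith)]
  ring

lemma aw_wirtinger {h : ℂ → ℝ} {H : ℂ → ℂ} {D z : ℂ} (hH : HasDerivAt H D z)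
    (heq : ∀ᶠ ζ in nhds z, h ζ = (H ζ).re / (2*Real.pi)) :
    wirtinger h z = D / (4*Real.pi) := by
  have h1 : HasFDerivAt H ((ContinuousLinearMap.smulRight (1 : ℂ →L[ℂ] ℂ) D).restrictScalars ℝ) z :=
    hH.hasFDerivAt.restrictScalars ℝ
  have h2 : HasFDerivAt (fun ζ => (H ζ).re)
      (Complex.reCLM.comp ((ContinuousLinearMap.smulRight (1 : ℂ →L[ℂ] ℂ) D).restrictScalars ℝ)) z :=
    (Complex.reCLM.hasFDerivAt).comp z h1
  have h3 := h2.const_smul (R := ℝ) (2*Real.pi)⁻¹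
  have h4 : HasFDerivAt h ((2*Real.pi)⁻¹ • (Complex.reCLM.comp
      ((ContinuousLinearMap.smulRight (1 : ℂ →L[ℂ] ℂ) D).restrictScalars ℝ))) z := by
    apply h3.congr_of_eventuallyEq
    filter_upwards [heq] with ζ hζ
    rw [hζ]
    simp [smul_eq_mul]
    ring
  have h5 := h4.fderiv
  unfold wirtinger
  rw [h5]
  simp only [ContinuousLinearMap.coe_smul', Pi.smul_apply, ContinuousLinearMap.coe_comp',
    Function.comp_apply, ContinuousLinearMap.coe_restrictScalars',
    ContinuousLinearMap.smulRight_apply, ContinuousLinearMap.one_apply, smul_eq_mul,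
    Complex.reCLM_apply, one_mul]
  rw [Complex.ext_iff]
  have hπ : Real.pi ≠ 0 := Real.pi_ne_zero
  constructor <;>
    simp [Complex.div_re, Complex.div_im, Complex.mul_re, Complex.mul_im, Complex.normSq_apply] <;>
    field_simp <;> ring

end aux

/-- For an arc `F = {e^{iθ} : a < θ < b}` on the unit circle, `α ∈ (0,1)`,
and any `z` in the level set `L_F(α) = {z ∈ D : χ̂_F(z) = α}`, one has
`|∂χ̂_F/∂z (z)| = sin(πα)/(π(1 − |z|²))`. -/
theorem abs_wirtinger_on_levelSet (a b : ℝ) (hab : 0 < b - a) (hab' : b - a < 2 * Real.pi)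
    (α : ℝ) (hα : α ∈ Set.Ioo (0 : ℝ) 1) (z : ℂ) (hz : z ∈ ball (0 : ℂ) 1)
    (hzα : poissonArc a b z = α) :
    ‖wirtinger (poissonArc a b) z‖ =
      Real.sin (Real.pi * α) / (Real.pi * (1 - ‖z‖ ^ 2)) := by
  have hz1 : ‖z‖ < 1 := by
    have := mem_ball.1 hz
    simpa [Complex.dist_eq] using this
  set A : ℂ := Complex.exp ((a:ℂ)*Complex.I) with hAdef
  set B : ℂ := Complex.exp ((b:ℂ)*Complex.I) with hBdef
  have hAne : A - z ≠ 0 := aw_ne a hz1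
  have hBne : B - z ≠ 0 := aw_ne b hz1
  -- the holomorphic integral and its derivative
  have heq : ∀ᶠ ζ in nhds z, poissonArc a b ζ =
      ((∫ θ in a..b, (Complex.exp (θ*Complex.I) + ζ)/(Complex.exp (θ*Complex.I) - ζ)).re) / (2*Real.pi) := by
    filter_upwards [isOpen_ball.eventually_mem hz] with ζ hζ
    have hζ1 : ‖ζ‖ < 1 := by
      have := mem_ball.1 hζ
      simpa [Complex.dist_eq] using this
    have hint := (aw_contK hζ1).intervalIntegrable (μ := MeasureTheory.volume) a b
    have hcomm := ContinuousLinearMap.intervalIntegral_comp_comm Complex.reCLM hint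
    simp only [Complex.reCLM_apply] at hcomm
    rw [poissonArc]
    rw [hcomm]
  have hHd : HasDerivAt (fun ζ => ∫ θ in a..b, (Complex.exp (θ*Complex.I) + ζ)/(Complex.exp (θ*Complex.I) - ζ))
      (2*Complex.I/(B-z) - 2*Complex.I/(A-z)) z := by
    have h := aw_hasDerivAt_H a b hz1
    rwa [aw_integral_deriv a b hz1] at h
  have hw := aw_wirtinger hHd heq
  -- the value of the real part of the integral at z
  have hWre : (∫ θ in a..b, (Complex.exp (θ*Complex.I) + z)/(Complex.exp (θ*Complex.I) - z)).re
      = 2*Real.pi*α := by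
    have hint := (aw_contK hz1).intervalIntegrable (μ := MeasureTheory.volume) a b
    have hcomm := ContinuousLinearMap.intervalIntegral_comp_comm Complex.reCLM hint
    simp only [Complex.reCLM_apply] at hcomm
    rw [← hcomm]
    rw [poissonArc] at hzα
    field_simp at hzα
    linarith [hzα]
  -- the exponential identity
  set C : ℂ := ∫ θ in a..b, Complex.I * Complex.exp (θ*Complex.I)/(Complex.exp (θ*Complex.I) - z) with hCdef
  have hB : B - z = (A - z) * Complex.exp C := aw_exp_identity a b hz1
  have hCim : C.im = Real.pi*α + (b-a)/2 := by
    have h1 : ∀ θ : ℝ, Complex.I * Complex.exp (θ*Complex.I)/(Complex.exp (θ*Complex.I) - z)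
        = Complex.I/2 * ((Complex.exp (θ*Complex.I) + z)/(Complex.exp (θ*Complex.I) - z)) + Complex.I/2 := by
      intro θ
      have hne' : Complex.exp (Complex.I*θ) - z ≠ 0 := by rw [mul_comm]; exact aw_ne θ hz1
      field_simp [aw_ne θ hz1, hne']
      ring
    have h2 : C = Complex.I/2 * (∫ θ in a..b, (Complex.exp (θ*Complex.I) + z)/(Complex.exp (θ*Complex.I) - z))
        + (b-a) • (Complex.I/2 : ℂ) := by
      rw [hCdef]
      rw [intervalIntegral.integral_congr (g := fun θ =>
        Complex.I/2 * ((Complex.exp (θ*Complex.I) + z)/(Complex.exp (θ*Complex.I) - z)) + Complex.I/2)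
        (fun θ _ => h1 θ)]
      rw [intervalIntegral.integral_add ((show Continuous fun θ : ℝ => Complex.I/2 * ((Complex.exp (θ*Complex.I) + z)/(Complex.exp (θ*Complex.I) - z)) from continuous_const.mul (aw_contK hz1)).intervalIntegrable a b)
        intervalIntegrable_const]
      rw [intervalIntegral.integral_const_mul, intervalIntegral.integral_const]
    rw [h2]
    simp [Complex.add_im, Complex.mul_im, Complex.smul_im, hWre]
    ring
  -- the sine identity
  set s : ℝ := (b-a)/2 with hsdef
  have hbs : a + 2*s = b := by rw [hsdef]; ring
  have him := aw_im a s z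
  rw [hbs] at him
  have hkey : (B - z) * (starRingEnd ℂ) (A - z) * Complex.exp (((-s : ℝ):ℂ)*Complex.I)
      = (Complex.normSq (A - z) : ℂ) * Complex.exp (C - (s:ℂ)*Complex.I) := by
    rw [hB]
    rw [show (A-z)*Complex.exp C * (starRingEnd ℂ) (A-z) * Complex.exp (((-s : ℝ):ℂ)*Complex.I)
      = ((A-z) * (starRingEnd ℂ) (A-z)) * (Complex.exp C * Complex.exp (((-s : ℝ):ℂ)*Complex.I)) by ring]
    rw [Complex.mul_conj, ← Complex.exp_add]
    congr 1
    push_cast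
    ring
  have hsin : (1 - Complex.normSq z) * Real.sin s
      = Complex.normSq (A - z) * (Real.exp C.re * Real.sin (Real.pi * α)) := by
    have h3 := congrArg Complex.im hkey
    rw [him] at h3
    rw [h3]
    have hre : (C - (s:ℂ)*Complex.I).re = C.re := by simp
    have him2 : (C - (s:ℂ)*Complex.I).im = Real.pi * α := by
      simp [Complex.sub_im, hCim, hsdef]
    simp [Complex.mul_im, Complex.exp_im, Complex.exp_re, hre, him2]
  have habsB : ‖B - z‖ = ‖A - z‖ * Real.exp C.re := by
    rw [hB, norm_mul, Complex.norm_exp]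
  -- |D|
  have hD : 2*Complex.I/(B-z) - 2*Complex.I/(A-z) = 2*Complex.I*(A - B)/((B-z)*(A-z)) := by
    field_simp
    ring
  have habsD : ‖2*Complex.I/(B-z) - 2*Complex.I/(A-z)‖
      = 2 * (2*Real.sin s) / (‖B-z‖ * ‖A-z‖) := by
    rw [hD, norm_div, norm_mul, norm_mul, norm_mul]
    rw [Complex.norm_two, Complex.norm_I, mul_one]
    rw [hAdef, hBdef, aw_absAB a b hab hab']
  -- finish
  rw [hw, norm_div, habsD]
  have habs4pi : ‖4*(Real.pi:ℂ)‖ = 4*Real.pi := by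
    rw [norm_mul, Complex.norm_real, Real.norm_eq_abs, abs_of_pos Real.pi_pos]
    norm_num
  rw [habs4pi]
  have hρA : 0 < ‖A - z‖ := norm_pos_iff.2 hAne
  have hρB : 0 < ‖B - z‖ := norm_pos_iff.2 hBne
  have hnz : Complex.normSq z < 1 := by
    rw [← Complex.sq_norm]
    nlinarith [norm_nonneg z]
  have hnA : Complex.normSq (A - z) = ‖A - z‖^2 := (Complex.sq_norm _).symm
  rw [hnA] at hsin
  rw [Complex.sq_norm]
  rw [habsB]
  have hexp : (0:ℝ) < Real.exp C.re := Real.exp_pos _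
  have h1n : (0:ℝ) < 1 - Complex.normSq z := by linarith
  rw [div_div, div_eq_div_iff (by positivity) (by positivity)]
  linear_combination (4*Real.pi) * hsin
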